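/- arXiv:2505.22196 — 3 statements merged into one kernel-verified Lean document; each statement's English description precedes it below -/
import Mathlib

section
/- Let f : 𝒳 → ℝ^d be an encoder with ‖f(x)‖ = 1 for all x ∈ 𝒳, assume the identity map belongs to 𝒜, assume τ_K < 1, and assume the centered representation property E_{a~P_A} f(a(x̄)) = f(x̄) for every x̄ ∈ 𝒳. Then R^sup(f) ≤ (1/(1−τ_K)) · [ R^un(f) − E_{(c,c_1,…,c_K)~π^{K+1}} log(Col(c,{c_k}) + 1) + D_min(f) + D_max(f) ], i.e. the coefficient of the maximum same-image distance improves from 5 to 1. -/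
open MeasureTheory Real
open scoped BigOperators RealInnerProductSpace

noncomputable section

variable {X : Type*} [MeasurableSpace X] {Ω : Type*} [MeasurableSpace Ω] {d C : ℕ}

/-- The InfoNCE loss in logistic form:
`L^un(x, x', {x_k}; f) = log(1 + Σ_k exp(−f(x)ᵀ[f(x') − f(x_k)]))`. -/
def infoNCE (f : X → EuclideanSpace ℝ (Fin d)) (K : ℕ) (x x' : X) (xs : Fin K → X) : ℝ :=
  Real.log (1 + ∑ k, Real.exp (-⟪f x, f x' - f (xs k)⟫))

/-- The probability of drawing the class tuple `(c, c_1, …, c_K)` from `π^{K+1}`. -/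
def clsWeight (pr : Fin C → ℝ) {K : ℕ} (c : Fin C) (cs : Fin K → Fin C) : ℝ :=
  pr c * ∏ k, pr (cs k)

/-- The unsupervised contrastive risk `R^un(f)`. -/
def Run (pr : Fin C → ℝ) (ρ : Fin C → Measure X) (PA : Measure Ω) (A : Ω → X → X)
    (f : X → EuclideanSpace ℝ (Fin d)) (K : ℕ) : ℝ :=
  ∑ c, ∑ cs : Fin K → Fin C, clsWeight pr c cs *
    ∫ xb, ∫ xs, ∫ a, ∫ a', ∫ as,
        infoNCE f K (A a xb) (A a' xb) (fun k => A (as k) (xs k))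
      ∂(Measure.pi fun _ : Fin K => PA) ∂PA ∂PA
      ∂(Measure.pi fun k => ρ (cs k)) ∂(ρ c)

/-- The mean-classifier weight `μ_c = E_{x̄~ρ_c} f(x̄)`. -/
def meanRep (ρ : Fin C → Measure X) (f : X → EuclideanSpace ℝ (Fin d)) (c : Fin C) :
    EuclideanSpace ℝ (Fin d) :=
  ∫ xb, f xb ∂(ρ c)

/-- The collision number `Col(c, {c_k}) = Σ_k 1[c_k = c]`. -/
def colNum {K : ℕ} (c : Fin C) (cs : Fin K → Fin C) : ℕ :=
  ∑ k, if cs k = c then 1 else 0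

/-- The class-collision probability `τ_K = P(Col ≠ 0)`. -/
def tauK (pr : Fin C → ℝ) (K : ℕ) : ℝ :=
  ∑ c, ∑ cs : Fin K → Fin C, if colNum c cs ≠ 0 then clsWeight pr c cs else 0

/-- The expected logistic loss of the mean classifier on the task `(c, c_1, …, c_K)`. -/
def supLoss (ρ : Fin C → Measure X) (f : X → EuclideanSpace ℝ (Fin d)) {K : ℕ}
    (c : Fin C) (cs : Fin K → Fin C) : ℝ :=
  ∫ xb, Real.log (1 + ∑ k, Real.exp (-⟪f xb, meanRep ρ f c - meanRep ρ f (cs k)⟫)) ∂(ρ c)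

/-- The supervised risk of the mean classifier, conditioned on no class collision. -/
def Rsup (pr : Fin C → ℝ) (ρ : Fin C → Measure X) (f : X → EuclideanSpace ℝ (Fin d))
    (K : ℕ) : ℝ :=
  (∑ c, ∑ cs : Fin K → Fin C,
    if colNum c cs = 0 then clsWeight pr c cs * supLoss ρ f c cs else 0) / (1 - tauK pr K)

/-- `E_{(c,c_1,…,c_K)~π^{K+1}} log(Col + 1)`. -/
def expLogCol (pr : Fin C → ℝ) (K : ℕ) : ℝ :=
  ∑ c, ∑ cs : Fin K → Fin C, clsWeight pr c cs * Real.log (colNum c cs + 1)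

/-- `D_min(f)`: expected minimum distance between augmentations of two i.i.d. same-class
images, `E_c E_{x̄,x̄'~ρ_c} E_a inf_{a'} ‖f(a(x̄)) − f(a'(x̄'))‖`. -/
def Dmin (pr : Fin C → ℝ) (ρ : Fin C → Measure X) (PA : Measure Ω) (A : Ω → X → X)
    (f : X → EuclideanSpace ℝ (Fin d)) : ℝ :=
  ∑ c, pr c *
    ∫ xb, ∫ xb', ∫ a, (⨅ a' : Ω, ‖f (A a xb) - f (A a' xb')‖) ∂PA ∂(ρ c) ∂(ρ c)

/-- `D_max(f)`: expected maximum distance between two augmentations of the same image,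
`E_c E_{x̄'~ρ_c} sup_{a,a'} ‖f(a(x̄')) − f(a'(x̄'))‖`. -/
def Dmax (pr : Fin C → ℝ) (ρ : Fin C → Measure X) (A : Ω → X → X)
    (f : X → EuclideanSpace ℝ (Fin d)) : ℝ :=
  ∑ c, pr c * ∫ xb', (⨆ p : Ω × Ω, ‖f (A p.1 xb') - f (A p.2 xb')‖) ∂(ρ c)

/-- The intermediate supervised risk `R̄^sup(f)`. -/
def Rbarsup (pr : Fin C → ℝ) (ρ : Fin C → Measure X) (f : X → EuclideanSpace ℝ (Fin d))
    (K : ℕ) : ℝ :=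
  ∑ c, ∑ cs : Fin K → Fin C, clsWeight pr c cs * supLoss ρ f c cs

/-- The inner risk `r_k(i_1,…,i_k)` for fixed anchor class `c`, anchor image `xb` and
anchor augmentation `a`: the first `k` negatives are drawn from classes `i_1,…,i_k` and
the remaining `K − k` negatives from class `c`. -/
def innerRisk (ρ : Fin C → Measure X) (PA : Measure Ω) (A : Ω → X → X)
    (f : X → EuclideanSpace ℝ (Fin d)) (K : ℕ) (c : Fin C) (xb : X) (a : Ω)
    (k : ℕ) (i : Fin k → Fin C) : ℝ :=
  ∫ xs, ∫ a', ∫ as, infoNCE f K (A a xb) (A a' xb) (fun j => A (as j) (xs j))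
    ∂(Measure.pi fun _ : Fin K => PA) ∂PA
    ∂(Measure.pi fun j : Fin K => ρ (if h : (j : ℕ) < k then i ⟨j, h⟩ else c))

/-- The weight `p_k(i_1,…,i_k) = binom(K,k)·π_{i_1}⋯π_{i_k}·π_c^{K−k}`. -/
def pWeight (pr : Fin C → ℝ) (K : ℕ) (c : Fin C) (k : ℕ) (i : Fin k → Fin C) : ℝ :=
  (Nat.choose K k : ℝ) * (∏ m, pr (i m)) * pr c ^ (K - k)

/-- `r_k^sup(i_1,…,i_k) = log(1 + (K−k) + Σ_{m=1}^k exp(−uᵀ(μ_c − μ_{i_m})))`, where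
`u` is the representation of the anchor. -/
def rkSup (ρ : Fin C → Measure X) (f : X → EuclideanSpace ℝ (Fin d)) (K : ℕ)
    (c : Fin C) (u : EuclideanSpace ℝ (Fin d)) (k : ℕ) (i : Fin k → Fin C) : ℝ :=
  Real.log (1 + ((K - k : ℕ) : ℝ) +
    ∑ m, Real.exp (-⟪u, meanRep ρ f c - meanRep ρ f (i m)⟫))


-- ===== auxiliary lemmas =====


/-- Supporting-hyperplane inequality for log-sum-exp. -/
lemma logsumexp_tangent {K : ℕ} (z w : Fin K → ℝ) :
    Real.log (1 + ∑ k, Real.exp (w k)) +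
      ∑ k, Real.exp (w k) / (1 + ∑ j, Real.exp (w j)) * (z k - w k) ≤
    Real.log (1 + ∑ k, Real.exp (z k)) := by
  set S : ℝ := 1 + ∑ j, Real.exp (w j) with hS
  have hSpos : 0 < S := by
    have : (0:ℝ) ≤ ∑ j, Real.exp (w j) :=
      Finset.sum_nonneg fun j _ => (Real.exp_pos _).le
    linarith
  have hZpos : 0 < 1 + ∑ k, Real.exp (z k) := by
    have : (0:ℝ) ≤ ∑ j, Real.exp (z j) :=
      Finset.sum_nonneg fun j _ => (Real.exp_pos _).le
    linarith
  -- weighted AM-GM over Option (Fin K)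
  have key : Real.exp (∑ k, Real.exp (w k) / S * (z k - w k)) ≤
      (1 + ∑ k, Real.exp (z k)) / S := by
    have h := Real.geom_mean_le_arith_mean_weighted Finset.univ
      (fun i : Option (Fin K) => Option.elim i (1/S) (fun k => Real.exp (w k) / S))
      (fun i : Option (Fin K) => Option.elim i 1 (fun k => Real.exp (z k - w k)))
      (fun i _ => by
        cases i with
        | none => exact div_nonneg zero_le_one hSpos.le
        | some k => exact div_nonneg (Real.exp_pos _).le hSpos.le)
      (by
        rw [Fintype.sum_option]
        simp only [Option.elim]
        rw [← Finset.sum_div, ← add_div, ← hS, div_self hSpos.ne'])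
      (fun i _ => by
        cases i with
        | none => exact zero_le_one
        | some k => exact (Real.exp_pos _).le)
    rw [Fintype.sum_option, Fintype.prod_option] at h
    simp only [Option.elim] at h
    have hprod : ∀ k : Fin K,
        Real.exp (z k - w k) ^ (Real.exp (w k) / S) =
          Real.exp ((z k - w k) * (Real.exp (w k) / S)) := by
      intro k
      rw [← Real.exp_mul]
    rw [Real.one_rpow] at h
    simp only [hprod, ← Real.exp_sum, one_mul] at h
    have hsum : ∀ k : Fin K,
        Real.exp (w k) / S * Real.exp (z k - w k) = Real.exp (z k) / S := by
      intro k
      rw [div_mul_eq_mul_div, ← Real.exp_add]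
      ring_nf
    simp only [hsum] at h
    calc Real.exp (∑ k, Real.exp (w k) / S * (z k - w k))
        = Real.exp (∑ k, (z k - w k) * (Real.exp (w k) / S)) := by
          congr 1; exact Finset.sum_congr rfl fun k _ => by ring
      _ ≤ 1/S + ∑ k, Real.exp (z k) / S := by simpa using h
      _ = (1 + ∑ k, Real.exp (z k)) / S := by
          rw [← Finset.sum_div, add_div, one_div]
  calc Real.log S + ∑ k, Real.exp (w k) / S * (z k - w k)
      ≤ Real.log S + Real.log ((1 + ∑ k, Real.exp (z k)) / S) := by
        have := Real.log_exp (∑ k, Real.exp (w k) / S * (z k - w k))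
        have h2 := Real.log_le_log (Real.exp_pos _) key
        linarith
    _ = Real.log (1 + ∑ k, Real.exp (z k)) := by
        rw [Real.log_div hZpos.ne' hSpos.ne']; ring

/-- Jensen's inequality for log-sum-exp under a probability measure. -/
lemma jensen_logsumexp {α : Type*} [MeasurableSpace α] (ν : Measure α) [IsProbabilityMeasure ν] {K : ℕ}
    (Z : Fin K → α → ℝ) (hZ : ∀ k, Integrable (Z k) ν)
    (hI : Integrable (fun x => Real.log (1 + ∑ k, Real.exp (Z k x))) ν) :
    Real.log (1 + ∑ k, Real.exp (∫ x, Z k x ∂ν)) ≤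
      ∫ x, Real.log (1 + ∑ k, Real.exp (Z k x)) ∂ν := by
  set w : Fin K → ℝ := fun k => ∫ x, Z k x ∂ν with hw
  set S : ℝ := 1 + ∑ j, Real.exp (w j) with hS
  have hg : Integrable
      (fun x => Real.log S + ∑ k, Real.exp (w k) / S * (Z k x - w k)) ν := by
    refine (integrable_const _).add (integrable_finset_sum _ fun k _ => ?_)
    exact (((hZ k).sub (integrable_const _)).const_mul _)
  have hmono : ∫ x, (Real.log S + ∑ k, Real.exp (w k) / S * (Z k x - w k)) ∂ν ≤
      ∫ x, Real.log (1 + ∑ k, Real.exp (Z k x)) ∂ν := by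
    refine integral_mono hg hI fun x => ?_
    exact logsumexp_tangent (fun k => Z k x) w
  have hcalc : ∫ x, (Real.log S + ∑ k, Real.exp (w k) / S * (Z k x - w k)) ∂ν
      = Real.log S := by
    have hzero : ∀ k : Fin K, ∫ x, Real.exp (w k) / S * (Z k x - w k) ∂ν = 0 := by
      intro k
      rw [integral_const_mul, integral_sub (hZ k) (integrable_const _), integral_const]
      simp [hw]
    have h1 : ∫ x, (Real.log S + ∑ k, Real.exp (w k) / S * (Z k x - w k)) ∂ν
        = (∫ _x, Real.log S ∂ν) + ∫ x, ∑ k, Real.exp (w k) / S * (Z k x - w k) ∂ν :=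
      integral_add (integrable_const _)
        (integrable_finset_sum _ fun k _ => (((hZ k).sub (integrable_const _)).const_mul _))
    have h2 : ∫ x, ∑ k, Real.exp (w k) / S * (Z k x - w k) ∂ν
        = ∑ k, ∫ x, Real.exp (w k) / S * (Z k x - w k) ∂ν :=
      integral_finset_sum _ fun k _ => (((hZ k).sub (integrable_const _)).const_mul _)
    rw [h1, h2]
    simp [hzero]
  rw [← hcalc]; exact hmono

/-- Marginal of a product of probability measures. -/
lemma pi_map_eval {ι : Type*} [Fintype ι] [DecidableEq ι] {β : ι → Type*} [∀ i, MeasurableSpace (β i)]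
    (ν : ∀ i, Measure (β i)) [∀ i, IsProbabilityMeasure (ν i)] (i : ι) :
    (Measure.pi ν).map (Function.eval i) = ν i := by
  ext s hs
  rw [Measure.map_apply (measurable_pi_apply i) hs]
  rw [Set.eval_preimage]
  rw [Measure.pi_pi]
  rw [Fintype.prod_eq_single i fun j hj => by simp [Function.update_of_ne hj]]
  simp

/-- Integral over a product measure of a function of one coordinate. -/
lemma integral_pi_eval {ι : Type*} [Fintype ι] [DecidableEq ι] {β : ι → Type*} [∀ i, MeasurableSpace (β i)]
    (ν : ∀ i, Measure (β i)) [∀ i, IsProbabilityMeasure (ν i)] (i : ι)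
    {E : Type*} [NormedAddCommGroup E] [NormedSpace ℝ E]
    (g : β i → E) (hg : AEStronglyMeasurable g (ν i)) :
    ∫ x, g (x i) ∂(Measure.pi ν) = ∫ y, g y ∂(ν i) := by
  rw [← pi_map_eval ν i] at hg ⊢
  exact (integral_map (measurable_pi_apply i).aemeasurable hg).symm

section Helpers

lemma integrable_of_bdd {α : Type*} [MeasurableSpace α] {ν : Measure α} [IsFiniteMeasure ν]
    {g : α → ℝ} (hm : AEStronglyMeasurable g ν) {c : ℝ} (hb : ∀ x, |g x| ≤ c) :
    Integrable g ν :=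
  Integrable.mono' (integrable_const c) hm
    (Filter.Eventually.of_forall (by simpa [Real.norm_eq_abs] using hb))

lemma integral_le_const {α : Type*} [MeasurableSpace α] {ν : Measure α}
    [IsProbabilityMeasure ν] {g : α → ℝ} (hint : Integrable g ν) {c : ℝ}
    (h : ∀ x, g x ≤ c) : ∫ x, g x ∂ν ≤ c := by
  calc ∫ x, g x ∂ν ≤ ∫ _x, c ∂ν := integral_mono hint (integrable_const c) h
    _ = c := by simp

lemma const_le_integral {α : Type*} [MeasurableSpace α] {ν : Measure α}
    [IsProbabilityMeasure ν] {g : α → ℝ} (hint : Integrable g ν) {c : ℝ}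
    (h : ∀ x, c ≤ g x) : c ≤ ∫ x, g x ∂ν := by
  calc c = ∫ _x, c ∂ν := by simp
    _ ≤ ∫ x, g x ∂ν := integral_mono (integrable_const c) hint h

lemma logsum_nonneg {K : ℕ} (t : Fin K → ℝ) : 0 ≤ Real.log (1 + ∑ k, Real.exp (t k)) :=
  Real.log_nonneg (by
    have : (0:ℝ) ≤ ∑ k, Real.exp (t k) := Finset.sum_nonneg fun k _ => (Real.exp_pos _).le
    linarith)

lemma logsum_le {K : ℕ} (t : Fin K → ℝ) (ht : ∀ k, t k ≤ 2) :
    Real.log (1 + ∑ k, Real.exp (t k)) ≤ Real.log (1 + K * Real.exp 2) := by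
  apply Real.log_le_log (by positivity)
  have : ∑ k, Real.exp (t k) ≤ ∑ _k : Fin K, Real.exp 2 :=
    Finset.sum_le_sum fun k _ => Real.exp_le_exp.2 (ht k)
  simpa using this

lemma abs_logsum_le {K : ℕ} (t : Fin K → ℝ) (ht : ∀ k, t k ≤ 2) :
    |Real.log (1 + ∑ k, Real.exp (t k))| ≤ Real.log (1 + K * Real.exp 2) := by
  rw [abs_of_nonneg (logsum_nonneg t)]; exact logsum_le t ht

lemma logsumexp_shift {K : ℕ} (s : Fin K → ℝ) {δ : ℝ} (hδ : 0 ≤ δ) :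
    Real.log (1 + ∑ k, Real.exp (s k)) - δ ≤ Real.log (1 + ∑ k, Real.exp (s k - δ)) := by
  have h1 : (1 : ℝ) + ∑ k, Real.exp (s k - δ)
      = Real.exp (-δ) * (Real.exp δ + ∑ k, Real.exp (s k)) := by
    rw [mul_add, Finset.mul_sum, ← Real.exp_add]
    simp only [neg_add_cancel, Real.exp_zero]
    congr 1
    exact Finset.sum_congr rfl fun k _ => by rw [← Real.exp_add]; ring_nf
  have h2 : (0:ℝ) < Real.exp δ + ∑ k, Real.exp (s k) := by positivity
  rw [h1, Real.log_mul (Real.exp_ne_zero _) h2.ne', Real.log_exp]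
  have h3 : Real.log (1 + ∑ k, Real.exp (s k)) ≤ Real.log (Real.exp δ + ∑ k, Real.exp (s k)) := by
    apply Real.log_le_log (by positivity)
    have := Real.one_le_exp hδ
    linarith
  linarith

end Helpers

lemma tuple_bound {K : ℕ}
    (ρ : Fin C → Measure X) [∀ c, IsProbabilityMeasure (ρ c)]
    (PA : Measure Ω) [IsProbabilityMeasure PA]
    (A : Ω → X → X) (hA : Measurable fun p : Ω × X => A p.1 p.2)
    (f : X → EuclideanSpace ℝ (Fin d)) (hfm : Measurable f)
    (hf : ∀ x, ‖f x‖ = 1)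
    (hcent : ∀ xb : X, (∫ a, f (A a xb) ∂PA) = f xb)
    (c : Fin C) (cs : Fin K → Fin C) :
    supLoss ρ f c cs - (1 - ⟪meanRep ρ f c, meanRep ρ f c⟫) ≤
      ∫ xb, ∫ xs, ∫ a, ∫ a', ∫ as,
          infoNCE f K (A a xb) (A a' xb) (fun k => A (as k) (xs k))
        ∂(Measure.pi fun _ : Fin K => PA) ∂PA ∂PA
        ∂(Measure.pi fun k => ρ (cs k)) ∂(ρ c) := by
  -- basic abbreviations
  set μ : Fin C → EuclideanSpace ℝ (Fin d) := meanRep ρ f with hμ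
  set M : ℝ := Real.log (1 + K * Real.exp 2) with hM
  -- basic measurability / integrability
  have hAx : ∀ x : X, Measurable fun a : Ω => A a x :=
    fun x => hA.comp (measurable_id.prodMk measurable_const)
  have hfA : ∀ x : X, Measurable fun a : Ω => f (A a x) := fun x => hfm.comp (hAx x)
  have hfAint : ∀ x : X, Integrable (fun a => f (A a x)) PA := by
    intro x
    refine Integrable.mono' (integrable_const (1:ℝ)) (hfA x).aestronglyMeasurable ?_
    exact Filter.Eventually.of_forall fun a => by rw [hf]
  have hfint : ∀ c' : Fin C, Integrable f (ρ c') := by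
    intro c'
    refine Integrable.mono' (integrable_const (1:ℝ)) hfm.aestronglyMeasurable ?_
    exact Filter.Eventually.of_forall fun x => by rw [hf]
  have hinner_cent : ∀ (v : EuclideanSpace ℝ (Fin d)) (x : X), ∫ a, ⟪v, f (A a x)⟫ ∂PA = ⟪v, f x⟫ := by
    intro v x
    rw [integral_inner (hfAint x) v, hcent]
  have hinner_mean : ∀ (v : EuclideanSpace ℝ (Fin d)) (c' : Fin C), ∫ y, ⟪v, f y⟫ ∂(ρ c') = ⟪v, μ c'⟫ := by
    intro v c'
    rw [integral_inner (hfint c') v]; rfl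
  have hnormμ : ∀ c' : Fin C, ‖μ c'‖ ≤ 1 := by
    intro c'
    calc ‖μ c'‖ ≤ ∫ x, ‖f x‖ ∂(ρ c') := norm_integral_le_integral_norm _
      _ = 1 := by simp [hf]
  have key1 : ∀ u v : EuclideanSpace ℝ (Fin d), ‖u‖ = 1 → ‖v‖ ≤ 1 → |⟪u, v⟫| ≤ 1 := by
    intro u v hu hv
    calc |⟪u, v⟫| ≤ ‖u‖ * ‖v‖ := abs_real_inner_le_norm u v
      _ ≤ 1 := by rw [hu]; simpa using hv
  -- the measurability tower
  have mG : Measurable fun q : (((X × (Fin K → X)) × Ω) × Ω) × (Fin K → Ω) =>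
      infoNCE f K (A q.1.1.2 q.1.1.1.1) (A q.1.2 q.1.1.1.1)
        (fun j => A (q.2 j) (q.1.1.1.2 j)) := by
    have hxb : Measurable fun q : (((X × (Fin K → X)) × Ω) × Ω) × (Fin K → Ω) =>
        q.1.1.1.1 := measurable_fst.fst.fst.fst
    have h1 : Measurable fun q : (((X × (Fin K → X)) × Ω) × Ω) × (Fin K → Ω) =>
        f (A q.1.1.2 q.1.1.1.1) := hfm.comp (hA.comp (measurable_fst.fst.snd.prodMk hxb))
    have h2 : Measurable fun q : (((X × (Fin K → X)) × Ω) × Ω) × (Fin K → Ω) =>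
        f (A q.1.2 q.1.1.1.1) := hfm.comp (hA.comp (measurable_fst.snd.prodMk hxb))
    have h3 : ∀ j : Fin K, Measurable fun q : (((X × (Fin K → X)) × Ω) × Ω) × (Fin K → Ω) =>
        f (A (q.2 j) (q.1.1.1.2 j)) := by
      intro j
      have hp : Measurable fun q : (((X × (Fin K → X)) × Ω) × Ω) × (Fin K → Ω) =>
          ((q.2 j, q.1.1.1.2 j) : Ω × X) :=
        ((measurable_pi_apply j).comp measurable_snd).prodMk
          ((measurable_pi_apply j).comp measurable_fst.fst.fst.snd)
      exact hfm.comp (hA.comp hp)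
    unfold infoNCE
    apply Real.measurable_log.comp
    apply Measurable.const_add
    apply Finset.measurable_sum
    intro k _
    exact Real.measurable_exp.comp (Measurable.neg (h1.inner ((h2.sub (h3 k)))))

  set PAK : Measure (Fin K → Ω) := Measure.pi fun _ : Fin K => PA with hPAK
  set Pxs : Measure (Fin K → X) := Measure.pi fun k : Fin K => ρ (cs k) with hPxs
  -- measurability tower
  have sm1 : StronglyMeasurable fun p : ((X × (Fin K → X)) × Ω) × Ω =>
      ∫ as, infoNCE f K (A p.1.2 p.1.1.1) (A p.2 p.1.1.1)
        (fun j => A (as j) (p.1.1.2 j)) ∂PAK :=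
    mG.stronglyMeasurable.integral_prod_right'
  have sm2 : StronglyMeasurable fun p : (X × (Fin K → X)) × Ω =>
      ∫ a', ∫ as, infoNCE f K (A p.2 p.1.1) (A a' p.1.1)
        (fun j => A (as j) (p.1.2 j)) ∂PAK ∂PA :=
    sm1.integral_prod_right'
  have sm3 : StronglyMeasurable fun p : X × (Fin K → X) =>
      ∫ a, ∫ a', ∫ as, infoNCE f K (A a p.1) (A a' p.1)
        (fun j => A (as j) (p.2 j)) ∂PAK ∂PA ∂PA :=
    sm2.integral_prod_right'
  have sm4 : StronglyMeasurable fun xb : X =>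
      ∫ xs, ∫ a, ∫ a', ∫ as, infoNCE f K (A a xb) (A a' xb)
        (fun j => A (as j) (xs j)) ∂PAK ∂PA ∂PA ∂Pxs :=
    sm3.integral_prod_right'
  -- pointwise bounds on infoNCE
  have hinfo_nonneg : ∀ (x x' : X) (g : Fin K → X), 0 ≤ infoNCE f K x x' g :=
    fun x x' g => logsum_nonneg _
  have hexp2 : ∀ (x x' : X) (g : Fin K → X) (k : Fin K),
      -⟪f x, f x' - f (g k)⟫ ≤ 2 := by
    intro x x' g k
    have h1 : |⟪f x, f x' - f (g k)⟫| ≤ 2 := by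
      calc |⟪f x, f x' - f (g k)⟫| ≤ ‖f x‖ * ‖f x' - f (g k)‖ := abs_real_inner_le_norm _ _
        _ ≤ 1 * (‖f x'‖ + ‖f (g k)‖) := by
            rw [hf]; exact mul_le_mul_of_nonneg_left (norm_sub_le _ _) zero_le_one
        _ = 2 := by rw [hf, hf]; norm_num
    calc -⟪f x, f x' - f (g k)⟫ ≤ |⟪f x, f x' - f (g k)⟫| := neg_le_abs _
      _ ≤ 2 := h1
  have hinfo_le : ∀ (x x' : X) (g : Fin K → X), infoNCE f K x x' g ≤ M :=
    fun x x' g => logsum_le _ (hexp2 x x' g)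
  have hinfo_abs : ∀ (x x' : X) (g : Fin K → X), |infoNCE f K x x' g| ≤ M :=
    fun x x' g => abs_logsum_le _ (hexp2 x x' g)
  -- integrability tower
  have intG : ∀ (xb : X) (xs : Fin K → X) (a a' : Ω),
      Integrable (fun as => infoNCE f K (A a xb) (A a' xb)
        fun j => A (as j) (xs j)) PAK := by
    intro xb xs a a'
    have hp : Measurable fun as : Fin K → Ω =>
        (((((xb, xs), a), a'), as) : (((X × (Fin K → X)) × Ω) × Ω) × (Fin K → Ω)) :=
      measurable_const.prodMk measurable_id
    exact integrable_of_bdd (mG.comp hp).aestronglyMeasurable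
      (fun as => hinfo_abs _ _ _)
  have I1nonneg : ∀ (xb : X) (xs : Fin K → X) (a a' : Ω),
      0 ≤ ∫ as, infoNCE f K (A a xb) (A a' xb) (fun j => A (as j) (xs j)) ∂PAK :=
    fun xb xs a a' => integral_nonneg fun as => hinfo_nonneg _ _ _
  have I1le : ∀ (xb : X) (xs : Fin K → X) (a a' : Ω),
      (∫ as, infoNCE f K (A a xb) (A a' xb) (fun j => A (as j) (xs j)) ∂PAK) ≤ M :=
    fun xb xs a a' => integral_le_const (intG xb xs a a') fun as => hinfo_le _ _ _
  have intI1 : ∀ (xb : X) (xs : Fin K → X) (a : Ω),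
      Integrable (fun a' => ∫ as, infoNCE f K (A a xb) (A a' xb)
        (fun j => A (as j) (xs j)) ∂PAK) PA := by
    intro xb xs a
    have hp : Measurable fun a' : Ω =>
        ((((xb, xs), a), a') : ((X × (Fin K → X)) × Ω) × Ω) :=
      measurable_const.prodMk measurable_id
    refine integrable_of_bdd (c := M) (sm1.measurable.comp hp).aestronglyMeasurable
      (fun a' => ?_)
    rw [abs_of_nonneg (I1nonneg xb xs a a')]
    exact I1le xb xs a a'
  have I2nonneg : ∀ (xb : X) (xs : Fin K → X) (a : Ω),
      0 ≤ ∫ a', ∫ as, infoNCE f K (A a xb) (A a' xb)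
        (fun j => A (as j) (xs j)) ∂PAK ∂PA :=
    fun xb xs a => integral_nonneg fun a' => I1nonneg _ _ _ _
  have I2le : ∀ (xb : X) (xs : Fin K → X) (a : Ω),
      (∫ a', ∫ as, infoNCE f K (A a xb) (A a' xb)
        (fun j => A (as j) (xs j)) ∂PAK ∂PA) ≤ M :=
    fun xb xs a => integral_le_const (intI1 xb xs a) fun a' => I1le _ _ _ _
  have intI2 : ∀ (xb : X) (xs : Fin K → X),
      Integrable (fun a => ∫ a', ∫ as, infoNCE f K (A a xb) (A a' xb)
        (fun j => A (as j) (xs j)) ∂PAK ∂PA) PA := by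
    intro xb xs
    have hp : Measurable fun a : Ω => (((xb, xs), a) : (X × (Fin K → X)) × Ω) :=
      measurable_const.prodMk measurable_id
    refine integrable_of_bdd (c := M) (sm2.measurable.comp hp).aestronglyMeasurable
      (fun a => ?_)
    rw [abs_of_nonneg (I2nonneg xb xs a)]
    exact I2le xb xs a
  have I3nonneg : ∀ (xb : X) (xs : Fin K → X),
      0 ≤ ∫ a, ∫ a', ∫ as, infoNCE f K (A a xb) (A a' xb)
        (fun j => A (as j) (xs j)) ∂PAK ∂PA ∂PA :=
    fun xb xs => integral_nonneg fun a => I2nonneg _ _ _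
  have I3le : ∀ (xb : X) (xs : Fin K → X),
      (∫ a, ∫ a', ∫ as, infoNCE f K (A a xb) (A a' xb)
        (fun j => A (as j) (xs j)) ∂PAK ∂PA ∂PA) ≤ M :=
    fun xb xs => integral_le_const (intI2 xb xs) fun a => I2le _ _ _
  have intI3 : ∀ xb : X,
      Integrable (fun xs => ∫ a, ∫ a', ∫ as, infoNCE f K (A a xb) (A a' xb)
        (fun j => A (as j) (xs j)) ∂PAK ∂PA ∂PA) Pxs := by
    intro xb
    have hp : Measurable fun xs : Fin K → X => ((xb, xs) : X × (Fin K → X)) :=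
      measurable_const.prodMk measurable_id
    refine integrable_of_bdd (c := M) (sm3.measurable.comp hp).aestronglyMeasurable
      (fun xs => ?_)
    rw [abs_of_nonneg (I3nonneg xb xs)]
    exact I3le xb xs
  have I4nonneg : ∀ xb : X,
      0 ≤ ∫ xs, ∫ a, ∫ a', ∫ as, infoNCE f K (A a xb) (A a' xb)
        (fun j => A (as j) (xs j)) ∂PAK ∂PA ∂PA ∂Pxs :=
    fun xb => integral_nonneg fun xs => I3nonneg _ _
  have I4le : ∀ xb : X,
      (∫ xs, ∫ a, ∫ a', ∫ as, infoNCE f K (A a xb) (A a' xb)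
        (fun j => A (as j) (xs j)) ∂PAK ∂PA ∂PA ∂Pxs) ≤ M :=
    fun xb => integral_le_const (intI3 xb) fun xs => I3le _ _
  have intI4 : Integrable (fun xb => ∫ xs, ∫ a, ∫ a', ∫ as,
      infoNCE f K (A a xb) (A a' xb)
        (fun j => A (as j) (xs j)) ∂PAK ∂PA ∂PA ∂Pxs) (ρ c) := by
    refine integrable_of_bdd (c := M) sm4.aestronglyMeasurable (fun xb => ?_)
    rw [abs_of_nonneg (I4nonneg xb)]
    exact I4le xb

  -- Step 1: Jensen over the negatives' augmentations
  have step1 : ∀ (xb : X) (xs : Fin K → X) (a a' : Ω),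
      Real.log (1 + ∑ k, Real.exp
          (⟪f (A a xb), f (xs k)⟫ - ⟪f (A a xb), f (A a' xb)⟫)) ≤
        ∫ as, infoNCE f K (A a xb) (A a' xb) (fun j => A (as j) (xs j)) ∂PAK := by
    intro xb xs a a'
    set Z : Fin K → (Fin K → Ω) → ℝ := fun k as =>
      ⟪f (A a xb), f (A (as k) (xs k))⟫ - ⟪f (A a xb), f (A a' xb)⟫ with hZ
    have hZm : ∀ k, Measurable (Z k) := by
      intro k
      exact (Measurable.inner measurable_const
        ((hfA (xs k)).comp (measurable_pi_apply k))).sub measurable_const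
    have hZb : ∀ (k : Fin K) (as : Fin K → Ω), |Z k as| ≤ 2 := by
      intro k as
      have h1 := key1 (f (A a xb)) (f (A (as k) (xs k))) (hf _) (le_of_eq (hf _))
      have h2 := key1 (f (A a xb)) (f (A a' xb)) (hf _) (le_of_eq (hf _))
      calc |Z k as| ≤ |⟪f (A a xb), f (A (as k) (xs k))⟫| +
          |⟪f (A a xb), f (A a' xb)⟫| := abs_sub _ _
        _ ≤ 2 := by linarith
    have hZint : ∀ k, Integrable (Z k) PAK :=
      fun k => integrable_of_bdd (hZm k).aestronglyMeasurable (hZb k)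
    have hZint1 : ∀ k : Fin K,
        Integrable (fun as : Fin K → Ω => ⟪f (A a xb), f (A (as k) (xs k))⟫) PAK := by
      intro k
      refine integrable_of_bdd (c := 1) (Measurable.inner measurable_const
        ((hfA (xs k)).comp (measurable_pi_apply k))).aestronglyMeasurable ?_
      exact fun as => key1 _ _ (hf _) (le_of_eq (hf _))
    have hZval : ∀ k, ∫ as, Z k as ∂PAK =
        ⟪f (A a xb), f (xs k)⟫ - ⟪f (A a xb), f (A a' xb)⟫ := by
      intro k
      rw [hZ]
      rw [integral_sub (hZint1 k) (integrable_const _), integral_const]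
      have hmarg : ∫ as : Fin K → Ω, ⟪f (A a xb), f (A (as k) (xs k))⟫ ∂PAK =
          ∫ ω, ⟪f (A a xb), f (A ω (xs k))⟫ ∂PA :=
        integral_pi_eval (fun _ : Fin K => PA) k
          (fun ω => ⟪f (A a xb), f (A ω (xs k))⟫)
          (Measurable.inner measurable_const (hfA (xs k))).aestronglyMeasurable
      rw [hmarg, hinner_cent]
      simp
    have hLint : Integrable (fun as => Real.log (1 + ∑ k, Real.exp (Z k as))) PAK := by
      refine integrable_of_bdd (c := M) ?_ ?_
      · apply Measurable.aestronglyMeasurable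
        apply Real.measurable_log.comp
        apply Measurable.const_add
        exact Finset.measurable_sum _ fun k _ => Real.measurable_exp.comp (hZm k)
      · intro as
        exact abs_logsum_le _ fun k => (le_abs_self _).trans (hZb k as)
    have hJ := jensen_logsumexp PAK Z hZint hLint
    simp only [hZval] at hJ
    refine hJ.trans (le_of_eq ?_)
    refine integral_congr_ae (Filter.Eventually.of_forall fun as => ?_)
    simp only [hZ, infoNCE, inner_sub_right, neg_sub]
  -- Step 2: Jensen over the positive's augmentation
  have step2 : ∀ (xb : X) (xs : Fin K → X) (a : Ω),
      Real.log (1 + ∑ k, Real.exp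
          (⟪f (A a xb), f (xs k)⟫ - ⟪f (A a xb), f xb⟫)) ≤
        ∫ a', ∫ as, infoNCE f K (A a xb) (A a' xb)
          (fun j => A (as j) (xs j)) ∂PAK ∂PA := by
    intro xb xs a
    set Z : Fin K → Ω → ℝ := fun k a' =>
      ⟪f (A a xb), f (xs k)⟫ - ⟪f (A a xb), f (A a' xb)⟫ with hZ
    have hZm : ∀ k, Measurable (Z k) := by
      intro k
      exact measurable_const.sub (Measurable.inner measurable_const (hfA xb))
    have hZb : ∀ (k : Fin K) (a' : Ω), |Z k a'| ≤ 2 := by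
      intro k a'
      have h1 := key1 (f (A a xb)) (f (xs k)) (hf _) (le_of_eq (hf _))
      have h2 := key1 (f (A a xb)) (f (A a' xb)) (hf _) (le_of_eq (hf _))
      calc |Z k a'| ≤ |⟪f (A a xb), f (xs k)⟫| +
          |⟪f (A a xb), f (A a' xb)⟫| := abs_sub _ _
        _ ≤ 2 := by linarith
    have hZint : ∀ k, Integrable (Z k) PA :=
      fun k => integrable_of_bdd (hZm k).aestronglyMeasurable (hZb k)
    have hZval : ∀ k, ∫ a', Z k a' ∂PA =
        ⟪f (A a xb), f (xs k)⟫ - ⟪f (A a xb), f xb⟫ := by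
      intro k
      rw [hZ]
      have hint2 : Integrable (fun a' : Ω => ⟪f (A a xb), f (A a' xb)⟫) PA := by
        refine integrable_of_bdd (c := 1)
          (Measurable.inner measurable_const (hfA xb)).aestronglyMeasurable ?_
        exact fun a' => key1 _ _ (hf _) (le_of_eq (hf _))
      rw [integral_sub (integrable_const _) hint2, integral_const, hinner_cent]
      simp
    have hLint : Integrable (fun a' => Real.log (1 + ∑ k, Real.exp (Z k a'))) PA := by
      refine integrable_of_bdd (c := M) ?_ ?_
      · apply Measurable.aestronglyMeasurable
        apply Real.measurable_log.comp
        apply Measurable.const_add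
        exact Finset.measurable_sum _ fun k _ => Real.measurable_exp.comp (hZm k)
      · intro a'
        exact abs_logsum_le _ fun k => (le_abs_self _).trans (hZb k a')
    have hJ := jensen_logsumexp PA Z hZint hLint
    simp only [hZval] at hJ
    refine hJ.trans (integral_mono hLint (intI1 xb xs a) fun a' => ?_)
    exact step1 xb xs a a'
  -- Step 3: Jensen over the anchor's augmentation
  have step3 : ∀ (xb : X) (xs : Fin K → X),
      Real.log (1 + ∑ k, Real.exp (⟪f (xs k), f xb⟫ - 1)) ≤
        ∫ a, ∫ a', ∫ as, infoNCE f K (A a xb) (A a' xb)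
          (fun j => A (as j) (xs j)) ∂PAK ∂PA ∂PA := by
    intro xb xs
    set Z : Fin K → Ω → ℝ := fun k a =>
      ⟪f (A a xb), f (xs k)⟫ - ⟪f (A a xb), f xb⟫ with hZ
    have hZm : ∀ k, Measurable (Z k) := by
      intro k
      exact (Measurable.inner (hfA xb) measurable_const).sub
        (Measurable.inner (hfA xb) measurable_const)
    have hZb : ∀ (k : Fin K) (a : Ω), |Z k a| ≤ 2 := by
      intro k a
      have h1 := key1 (f (A a xb)) (f (xs k)) (hf _) (le_of_eq (hf _))
      have h2 := key1 (f (A a xb)) (f xb) (hf _) (le_of_eq (hf _))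
      calc |Z k a| ≤ |⟪f (A a xb), f (xs k)⟫| + |⟪f (A a xb), f xb⟫| := abs_sub _ _
        _ ≤ 2 := by linarith
    have hZint : ∀ k, Integrable (Z k) PA :=
      fun k => integrable_of_bdd (hZm k).aestronglyMeasurable (hZb k)
    have hZval : ∀ k, ∫ a, Z k a ∂PA = ⟪f (xs k), f xb⟫ - 1 := by
      intro k
      have he : (fun a => Z k a) = fun a => ⟪f (xs k) - f xb, f (A a xb)⟫ := by
        funext a
        simp only [hZ]
        rw [inner_sub_left, real_inner_comm (f (xs k)) (f (A a xb)),
          real_inner_comm (f xb) (f (A a xb))]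
      rw [he, hinner_cent (f (xs k) - f xb) xb, inner_sub_left,
        real_inner_self_eq_norm_sq, hf]
      norm_num
    have hLint : Integrable (fun a => Real.log (1 + ∑ k, Real.exp (Z k a))) PA := by
      refine integrable_of_bdd (c := M) ?_ ?_
      · apply Measurable.aestronglyMeasurable
        apply Real.measurable_log.comp
        apply Measurable.const_add
        exact Finset.measurable_sum _ fun k _ => Real.measurable_exp.comp (hZm k)
      · intro a
        exact abs_logsum_le _ fun k => (le_abs_self _).trans (hZb k a)
    have hJ := jensen_logsumexp PA Z hZint hLint
    simp only [hZval] at hJ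
    refine hJ.trans (integral_mono hLint (intI2 xb xs) fun a => ?_)
    exact step2 xb xs a
  -- Step 4: Jensen over the negatives' images
  have step4 : ∀ xb : X,
      Real.log (1 + ∑ k, Real.exp (⟪μ (cs k), f xb⟫ - 1)) ≤
        ∫ xs, ∫ a, ∫ a', ∫ as, infoNCE f K (A a xb) (A a' xb)
          (fun j => A (as j) (xs j)) ∂PAK ∂PA ∂PA ∂Pxs := by
    intro xb
    set Z : Fin K → (Fin K → X) → ℝ := fun k xs => ⟪f (xs k), f xb⟫ - 1 with hZ
    have hZm : ∀ k, Measurable (Z k) := by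
      intro k
      exact (Measurable.inner (hfm.comp (measurable_pi_apply k))
        measurable_const).sub measurable_const
    have hZb : ∀ (k : Fin K) (xs : Fin K → X), |Z k xs| ≤ 2 := by
      intro k xs
      have h1 := key1 (f (xs k)) (f xb) (hf _) (le_of_eq (hf _))
      calc |Z k xs| ≤ |⟪f (xs k), f xb⟫| + |(1:ℝ)| := abs_sub _ _
        _ ≤ 2 := by rw [abs_one]; linarith
    have hZint : ∀ k, Integrable (Z k) Pxs :=
      fun k => integrable_of_bdd (hZm k).aestronglyMeasurable (hZb k)
    have hZval : ∀ k, ∫ xs, Z k xs ∂Pxs = ⟪μ (cs k), f xb⟫ - 1 := by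
      intro k
      have hmarg : ∫ xs : Fin K → X, ⟪f (xs k), f xb⟫ ∂Pxs =
          ∫ y, ⟪f y, f xb⟫ ∂(ρ (cs k)) :=
        integral_pi_eval (fun j : Fin K => ρ (cs j)) k (fun y => ⟪f y, f xb⟫)
          (Measurable.inner hfm measurable_const).aestronglyMeasurable
      have hey : ∫ y, ⟪f y, f xb⟫ ∂(ρ (cs k)) = ⟪μ (cs k), f xb⟫ := by
        have he : (fun y => (⟪f y, f xb⟫ : ℝ)) = fun y => ⟪f xb, f y⟫ := by
          funext y; rw [real_inner_comm]
        rw [he, hinner_mean (f xb) (cs k), real_inner_comm]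
      have hint1 : Integrable (fun xs : Fin K → X => ⟪f (xs k), f xb⟫) Pxs := by
        refine integrable_of_bdd (c := 1) (Measurable.inner
          (hfm.comp (measurable_pi_apply k)) measurable_const).aestronglyMeasurable ?_
        exact fun xs => key1 _ _ (hf _) (le_of_eq (hf _))
      rw [hZ]
      rw [integral_sub hint1 (integrable_const _), integral_const, hmarg, hey]
      simp
    have hLint : Integrable (fun xs => Real.log (1 + ∑ k, Real.exp (Z k xs))) Pxs := by
      refine integrable_of_bdd (c := M) ?_ ?_
      · apply Measurable.aestronglyMeasurable
        apply Real.measurable_log.comp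
        apply Measurable.const_add
        exact Finset.measurable_sum _ fun k _ => Real.measurable_exp.comp (hZm k)
      · intro xs
        exact abs_logsum_le _ fun k => (le_abs_self _).trans (hZb k xs)
    have hJ := jensen_logsumexp Pxs Z hZint hLint
    simp only [hZval] at hJ
    refine hJ.trans (integral_mono hLint (intI3 xb) fun xs => ?_)
    exact step3 xb xs
  -- Step 5: shift by the centering defect
  have step5 : ∀ xb : X,
      Real.log (1 + ∑ k, Real.exp (-⟪f xb, μ c - μ (cs k)⟫)) -
        (1 - ⟪f xb, μ c⟫) ≤
      ∫ xs, ∫ a, ∫ a', ∫ as, infoNCE f K (A a xb) (A a' xb)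
          (fun j => A (as j) (xs j)) ∂PAK ∂PA ∂PA ∂Pxs := by
    intro xb
    have hδ : 0 ≤ 1 - ⟪f xb, μ c⟫ := by
      have := key1 (f xb) (μ c) (hf _) (hnormμ c)
      have := le_abs_self (⟪f xb, μ c⟫ : ℝ)
      linarith
    have hshift := logsumexp_shift (fun k => -⟪f xb, μ c - μ (cs k)⟫) hδ
    have heq : ∀ k : Fin K,
        -⟪f xb, μ c - μ (cs k)⟫ - (1 - ⟪f xb, μ c⟫) = ⟪μ (cs k), f xb⟫ - 1 := by
      intro k
      rw [inner_sub_right, real_inner_comm (μ (cs k)) (f xb)]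
      ring
    simp only [heq] at hshift
    exact hshift.trans (step4 xb)
  -- Step 6: integrate over the anchor image
  have hsupint : Integrable (fun xb =>
      Real.log (1 + ∑ k, Real.exp (-⟪f xb, μ c - μ (cs k)⟫))) (ρ c) := by
    refine integrable_of_bdd (c := M) ?_ ?_
    · apply Measurable.aestronglyMeasurable
      apply Real.measurable_log.comp
      apply Measurable.const_add
      exact Finset.measurable_sum _ fun k _ => Real.measurable_exp.comp
        (Measurable.inner hfm measurable_const).neg
    · intro xb
      refine abs_logsum_le _ fun k => ?_
      have h1 : |⟪f xb, μ c - μ (cs k)⟫| ≤ 2 := by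
        calc |⟪f xb, μ c - μ (cs k)⟫| ≤ |⟪f xb, μ c⟫| + |⟪f xb, μ (cs k)⟫| := by
              rw [inner_sub_right]; exact abs_sub _ _
          _ ≤ 2 := by
              have := key1 (f xb) (μ c) (hf _) (hnormμ c)
              have := key1 (f xb) (μ (cs k)) (hf _) (hnormμ (cs k))
              linarith
      calc -⟪f xb, μ c - μ (cs k)⟫ ≤ |⟪f xb, μ c - μ (cs k)⟫| := neg_le_abs _
        _ ≤ 2 := h1
  have hδint : Integrable (fun xb => (1:ℝ) - ⟪f xb, μ c⟫) (ρ c) := by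
    refine integrable_of_bdd (c := 2) ?_ ?_
    · exact (measurable_const.sub
        (Measurable.inner hfm measurable_const)).aestronglyMeasurable
    · intro xb
      have := key1 (f xb) (μ c) (hf _) (hnormμ c)
      have h1 := abs_le.mp this
      rw [abs_le]
      constructor <;> linarith [h1.1, h1.2]
  have hfinal := integral_mono
    (f := fun xb => Real.log (1 + ∑ k, Real.exp (-⟪f xb, μ c - μ (cs k)⟫)) -
      (1 - ⟪f xb, μ c⟫))
    (hsupint.sub hδint) intI4 (fun xb => step5 xb)
  rw [integral_sub hsupint hδint] at hfinal
  have hδval : ∫ xb, ((1:ℝ) - ⟪f xb, μ c⟫) ∂(ρ c) = 1 - ⟪μ c, μ c⟫ := by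
    have hint1 : Integrable (fun xb => (⟪f xb, μ c⟫ : ℝ)) (ρ c) := by
      refine integrable_of_bdd (c := 1)
        (Measurable.inner hfm measurable_const).aestronglyMeasurable ?_
      exact fun xb => key1 _ _ (hf _) (hnormμ c)
    rw [integral_sub (integrable_const _) hint1, integral_const]
    have he : (fun xb => (⟪f xb, μ c⟫ : ℝ)) = fun xb => ⟪μ c, f xb⟫ := by
      funext xb; rw [real_inner_comm]
    rw [he, hinner_mean (μ c) c]
    simp
  rw [hδval] at hfinal
  exact hfinal


lemma collision_bound {K : ℕ}
    (ρ : Fin C → Measure X) [∀ c, IsProbabilityMeasure (ρ c)]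
    (f : X → EuclideanSpace ℝ (Fin d)) (hfm : Measurable f)
    (hf : ∀ x, ‖f x‖ = 1) (c : Fin C) (cs : Fin K → Fin C) :
    Real.log ((colNum c cs : ℝ) + 1) ≤ supLoss ρ f c cs := by
  have hnormμ : ∀ c' : Fin C, ‖meanRep ρ f c'‖ ≤ 1 := by
    intro c'
    calc ‖meanRep ρ f c'‖ ≤ ∫ x, ‖f x‖ ∂(ρ c') := norm_integral_le_integral_norm _
      _ = 1 := by simp [hf]
  have hint : Integrable (fun xb => Real.log (1 + ∑ k, Real.exp
      (-⟪f xb, meanRep ρ f c - meanRep ρ f (cs k)⟫))) (ρ c) := by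
    refine integrable_of_bdd (c := Real.log (1 + K * Real.exp 2)) ?_ ?_
    · apply Measurable.aestronglyMeasurable
      apply Real.measurable_log.comp
      apply Measurable.const_add
      exact Finset.measurable_sum _ fun k _ => Real.measurable_exp.comp
        (Measurable.inner hfm measurable_const).neg
    · intro xb
      refine abs_logsum_le _ fun k => ?_
      calc -⟪f xb, meanRep ρ f c - meanRep ρ f (cs k)⟫
          ≤ |⟪f xb, meanRep ρ f c - meanRep ρ f (cs k)⟫| := neg_le_abs _
        _ ≤ ‖f xb‖ * ‖meanRep ρ f c - meanRep ρ f (cs k)‖ := abs_real_inner_le_norm _ _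
        _ ≤ 1 * (‖meanRep ρ f c‖ + ‖meanRep ρ f (cs k)‖) := by
            rw [hf]
            exact mul_le_mul_of_nonneg_left (norm_sub_le _ _) zero_le_one
        _ ≤ 2 := by
            have := hnormμ c
            have := hnormμ (cs k)
            linarith
  refine const_le_integral hint fun xb => ?_
  apply Real.log_le_log (by positivity)
  have hcol : ((colNum c cs : ℝ)) ≤ ∑ k, Real.exp
      (-⟪f xb, meanRep ρ f c - meanRep ρ f (cs k)⟫) := by
    have : ((colNum c cs : ℝ)) = ∑ k, if cs k = c then (1:ℝ) else 0 := by
      rw [colNum]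
      push_cast
      rfl
    rw [this]
    refine Finset.sum_le_sum fun k _ => ?_
    by_cases h : cs k = c
    · simp only [h, if_true]
      rw [sub_self, inner_zero_right, neg_zero, Real.exp_zero]
    · simp only [h, if_false]
      exact (Real.exp_pos _).le
  linarith

lemma class_delta_bound
    (ρ : Fin C → Measure X) [∀ c, IsProbabilityMeasure (ρ c)]
    (PA : Measure Ω) [IsProbabilityMeasure PA]
    (A : Ω → X → X) (hA : Measurable fun p : Ω × X => A p.1 p.2)
    (f : X → EuclideanSpace ℝ (Fin d)) (hfm : Measurable f)
    (hf : ∀ x, ‖f x‖ = 1)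
    (hid : ∃ ω : Ω, A ω = id)
    (hcent : ∀ xb : X, (∫ a, f (A a xb) ∂PA) = f xb)
    (c : Fin C)
    (hDminInt1 : ∀ xb xb' : X,
      Integrable (fun a => ⨅ a' : Ω, ‖f (A a xb) - f (A a' xb')‖) PA)
    (hDminInt2 : ∀ xb : X,
      Integrable (fun xb' => ∫ a, (⨅ a' : Ω, ‖f (A a xb) - f (A a' xb')‖) ∂PA) (ρ c))
    (hDminInt3 :
      Integrable
        (fun xb => ∫ xb', ∫ a, (⨅ a' : Ω, ‖f (A a xb) - f (A a' xb')‖) ∂PA ∂(ρ c)) (ρ c))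
    (hDmaxInt :
      Integrable (fun xb' => ⨆ p : Ω × Ω, ‖f (A p.1 xb') - f (A p.2 xb')‖) (ρ c)) :
    1 - ⟪meanRep ρ f c, meanRep ρ f c⟫ ≤
      (∫ xb, ∫ xb', ∫ a, (⨅ a' : Ω, ‖f (A a xb) - f (A a' xb')‖) ∂PA ∂(ρ c) ∂(ρ c)) +
      ∫ xb', (⨆ p : Ω × Ω, ‖f (A p.1 xb') - f (A p.2 xb')‖) ∂(ρ c) := by
  obtain ⟨ω₀, hω₀⟩ := hid
  have hΩ : Nonempty Ω := ⟨ω₀⟩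
  have hAx : ∀ x : X, Measurable fun a : Ω => A a x :=
    fun x => hA.comp (measurable_id.prodMk measurable_const)
  have hfA : ∀ x : X, Measurable fun a : Ω => f (A a x) := fun x => hfm.comp (hAx x)
  have hfAint : ∀ x : X, Integrable (fun a => f (A a x)) PA := by
    intro x
    refine Integrable.mono' (integrable_const (1:ℝ)) (hfA x).aestronglyMeasurable ?_
    exact Filter.Eventually.of_forall fun a => by rw [hf]
  have hfint : Integrable f (ρ c) := by
    refine Integrable.mono' (integrable_const (1:ℝ)) hfm.aestronglyMeasurable ?_
    exact Filter.Eventually.of_forall fun x => by rw [hf]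
  have hinner_cent : ∀ (v : EuclideanSpace ℝ (Fin d)) (x : X),
      ∫ a, ⟪v, f (A a x)⟫ ∂PA = ⟪v, f x⟫ := by
    intro v x
    rw [integral_inner (hfAint x) v, hcent]
  have hinner_mean : ∀ v : EuclideanSpace ℝ (Fin d),
      ∫ y, ⟪v, f y⟫ ∂(ρ c) = ⟪v, meanRep ρ f c⟫ := by
    intro v
    rw [integral_inner hfint v]; rfl
  set S : X → ℝ := fun xb' => ⨆ p : Ω × Ω, ‖f (A p.1 xb') - f (A p.2 xb')‖ with hSdef
  have hSbdd : ∀ xb' : X, BddAbove (Set.range fun p : Ω × Ω =>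
      ‖f (A p.1 xb') - f (A p.2 xb')‖) := by
    intro xb'
    refine ⟨2, ?_⟩
    rintro x ⟨p, rfl⟩
    calc ‖f (A p.1 xb') - f (A p.2 xb')‖ ≤ ‖f (A p.1 xb')‖ + ‖f (A p.2 xb')‖ :=
        norm_sub_le _ _
      _ = 2 := by rw [hf, hf]; norm_num
  have hSb : ∀ (xb' : X) (a a' : Ω), ‖f (A a xb') - f (A a' xb')‖ ≤ S xb' :=
    fun xb' a a' => le_ciSup (hSbdd xb') (a, a')
  -- pointwise: distance to the raw image is at most inf + S
  have pw1 : ∀ (xb xb' : X) (a : Ω),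
      ‖f (A a xb) - f xb'‖ ≤ (⨅ a' : Ω, ‖f (A a xb) - f (A a' xb')‖) + S xb' := by
    intro xb xb' a
    have h1 : ‖f (A a xb) - f xb'‖ - S xb' ≤ ⨅ a' : Ω, ‖f (A a xb) - f (A a' xb')‖ := by
      refine le_ciInf fun a' => ?_
      have ht : ‖f (A a xb) - f xb'‖ ≤
          ‖f (A a xb) - f (A a' xb')‖ + ‖f (A a' xb') - f xb'‖ := norm_sub_le_norm_sub_add_norm_sub _ _ _
      have h2 : ‖f (A a' xb') - f xb'‖ ≤ S xb' := by
        have : f xb' = f (A ω₀ xb') := by rw [hω₀]; rfl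
        rw [this]
        exact hSb xb' a' ω₀
      linarith
    linarith
  -- pointwise Cauchy–Schwarz step
  have pw2 : ∀ xb xb' : X, 1 - ⟪f xb, f xb'⟫ ≤
      (∫ a, (⨅ a' : Ω, ‖f (A a xb) - f (A a' xb')‖) ∂PA) + S xb' := by
    intro xb xb'
    have hintn : Integrable (fun a => ‖f (A a xb) - f xb'‖) PA := by
      refine integrable_of_bdd (c := 2)
        ((hfA xb).sub measurable_const).norm.aestronglyMeasurable ?_
      intro a
      rw [abs_of_nonneg (norm_nonneg _)]
      calc ‖f (A a xb) - f xb'‖ ≤ ‖f (A a xb)‖ + ‖f xb'‖ := norm_sub_le _ _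
        _ = 2 := by rw [hf, hf]; norm_num
    have hintip : Integrable (fun a => (⟪f xb, f (A a xb) - f xb'⟫ : ℝ)) PA := by
      refine integrable_of_bdd (c := 2) (Measurable.inner measurable_const
        ((hfA xb).sub measurable_const)).aestronglyMeasurable ?_
      intro a
      calc |(⟪f xb, f (A a xb) - f xb'⟫ : ℝ)| ≤ ‖f xb‖ * ‖f (A a xb) - f xb'‖ :=
          abs_real_inner_le_norm _ _
        _ ≤ 1 * (‖f (A a xb)‖ + ‖f xb'‖) := by
            rw [hf]; exact mul_le_mul_of_nonneg_left (norm_sub_le _ _) zero_le_one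
        _ = 2 := by rw [hf, hf]; norm_num
    have heq : ∫ a, (⟪f xb, f (A a xb) - f xb'⟫ : ℝ) ∂PA = 1 - ⟪f xb, f xb'⟫ := by
      have he : (fun a => (⟪f xb, f (A a xb) - f xb'⟫ : ℝ)) =
          fun a => ⟪f xb, f (A a xb)⟫ - ⟪f xb, f xb'⟫ := by
        funext a; rw [inner_sub_right]
      rw [he]
      have hint1 : Integrable (fun a => (⟪f xb, f (A a xb)⟫ : ℝ)) PA := by
        refine integrable_of_bdd (c := 1) (Measurable.inner measurable_const
          (hfA xb)).aestronglyMeasurable ?_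
        intro a
        calc |(⟪f xb, f (A a xb)⟫ : ℝ)| ≤ ‖f xb‖ * ‖f (A a xb)‖ :=
            abs_real_inner_le_norm _ _
          _ = 1 := by rw [hf, hf]; norm_num
      rw [integral_sub hint1 (integrable_const _), integral_const, hinner_cent,
        real_inner_self_eq_norm_sq, hf]
      simp
    have hmono1 : ∫ a, (⟪f xb, f (A a xb) - f xb'⟫ : ℝ) ∂PA ≤
        ∫ a, ‖f (A a xb) - f xb'‖ ∂PA := by
      refine integral_mono hintip hintn fun a => ?_
      calc (⟪f xb, f (A a xb) - f xb'⟫ : ℝ) ≤ ‖f xb‖ * ‖f (A a xb) - f xb'‖ :=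
          real_inner_le_norm _ _
        _ = ‖f (A a xb) - f xb'‖ := by rw [hf, one_mul]
    have hmono2 : ∫ a, ‖f (A a xb) - f xb'‖ ∂PA ≤
        (∫ a, (⨅ a' : Ω, ‖f (A a xb) - f (A a' xb')‖) ∂PA) + S xb' := by
      have hsum : Integrable
          (fun a => (⨅ a' : Ω, ‖f (A a xb) - f (A a' xb')‖) + S xb') PA :=
        (hDminInt1 xb xb').add (integrable_const _)
      have := integral_mono hintn hsum (fun a => pw1 xb xb' a)
      rwa [integral_add (hDminInt1 xb xb') (integrable_const _), integral_const,
        probReal_univ, smul_eq_mul, one_mul] at this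
    linarith [heq ▸ hmono1]
  -- integrate over xb'
  have pw3 : ∀ xb : X, 1 - ⟪f xb, meanRep ρ f c⟫ ≤
      (∫ xb', ∫ a, (⨅ a' : Ω, ‖f (A a xb) - f (A a' xb')‖) ∂PA ∂(ρ c)) +
        ∫ xb', S xb' ∂(ρ c) := by
    intro xb
    have hintl : Integrable (fun xb' => 1 - (⟪f xb, f xb'⟫ : ℝ)) (ρ c) := by
      refine integrable_of_bdd (c := 2) (measurable_const.sub
        (Measurable.inner measurable_const hfm)).aestronglyMeasurable ?_
      intro xb'
      have h1 : |(⟪f xb, f xb'⟫ : ℝ)| ≤ 1 := by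
        calc |(⟪f xb, f xb'⟫ : ℝ)| ≤ ‖f xb‖ * ‖f xb'‖ := abs_real_inner_le_norm _ _
          _ = 1 := by rw [hf, hf]; norm_num
      have h2 := abs_le.mp h1
      rw [abs_le]
      constructor <;> linarith [h2.1, h2.2]
    have heql : ∫ xb', (1 - (⟪f xb, f xb'⟫ : ℝ)) ∂(ρ c) = 1 - ⟪f xb, meanRep ρ f c⟫ := by
      have hint1 : Integrable (fun xb' => (⟪f xb, f xb'⟫ : ℝ)) (ρ c) := by
        refine integrable_of_bdd (c := 1)
          (Measurable.inner measurable_const hfm).aestronglyMeasurable ?_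
        intro xb'
        calc |(⟪f xb, f xb'⟫ : ℝ)| ≤ ‖f xb‖ * ‖f xb'‖ := abs_real_inner_le_norm _ _
          _ = 1 := by rw [hf, hf]; norm_num
      rw [integral_sub (integrable_const _) hint1, integral_const, hinner_mean]
      simp
    have hsum : Integrable
        (fun xb' => (∫ a, (⨅ a' : Ω, ‖f (A a xb) - f (A a' xb')‖) ∂PA) + S xb') (ρ c) :=
      (hDminInt2 xb).add hDmaxInt
    have := integral_mono hintl hsum (fun xb' => pw2 xb xb')
    rwa [heql, integral_add (hDminInt2 xb) hDmaxInt] at this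
  -- integrate over xb
  have hintl : Integrable (fun xb => 1 - (⟪f xb, meanRep ρ f c⟫ : ℝ)) (ρ c) := by
    refine integrable_of_bdd (c := 2) (measurable_const.sub
      ((Measurable.inner hfm measurable_const))).aestronglyMeasurable ?_
    intro xb
    have h1 : |(⟪f xb, meanRep ρ f c⟫ : ℝ)| ≤ 1 := by
      calc |(⟪f xb, meanRep ρ f c⟫ : ℝ)| ≤ ‖f xb‖ * ‖meanRep ρ f c‖ :=
          abs_real_inner_le_norm _ _
        _ ≤ 1 := by
            rw [hf, one_mul]
            calc ‖meanRep ρ f c‖ ≤ ∫ x, ‖f x‖ ∂(ρ c) := norm_integral_le_integral_norm _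
              _ = 1 := by simp [hf]
    have h2 := abs_le.mp h1
    rw [abs_le]
    constructor <;> linarith [h2.1, h2.2]
  have heql : ∫ xb, (1 - (⟪f xb, meanRep ρ f c⟫ : ℝ)) ∂(ρ c) =
      1 - ⟪meanRep ρ f c, meanRep ρ f c⟫ := by
    have hint1 : Integrable (fun xb => (⟪f xb, meanRep ρ f c⟫ : ℝ)) (ρ c) := by
      refine integrable_of_bdd (c := 1)
        (Measurable.inner hfm measurable_const).aestronglyMeasurable ?_
      intro xb
      calc |(⟪f xb, meanRep ρ f c⟫ : ℝ)| ≤ ‖f xb‖ * ‖meanRep ρ f c‖ :=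
          abs_real_inner_le_norm _ _
        _ ≤ 1 := by
            rw [hf, one_mul]
            calc ‖meanRep ρ f c‖ ≤ ∫ x, ‖f x‖ ∂(ρ c) := norm_integral_le_integral_norm _
              _ = 1 := by simp [hf]
    have he : (fun xb => (⟪f xb, meanRep ρ f c⟫ : ℝ)) =
        fun xb => ⟪meanRep ρ f c, f xb⟫ := by
      funext xb; rw [real_inner_comm]
    rw [integral_sub (integrable_const _) hint1, integral_const, he, hinner_mean]
    simp
  have hsum : Integrable (fun xb =>
      (∫ xb', ∫ a, (⨅ a' : Ω, ‖f (A a xb) - f (A a' xb')‖) ∂PA ∂(ρ c)) +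
        ∫ xb', S xb' ∂(ρ c)) (ρ c) :=
    hDminInt3.add (integrable_const _)
  have hfin := integral_mono hintl hsum (fun xb => pw3 xb)
  rwa [heql, integral_add hDminInt3 (integrable_const _), integral_const,
    probReal_univ, smul_eq_mul, one_mul] at hfin

/-- **Theorem 2 (Improved augmentation-aware error bound).**
Under the additional centered-representation assumption
`E_{a~P_A} f(a(x̄)) = f(x̄)`, the coefficient of `D_max` improves from `5` to `1`:
`R^sup(f) ≤ (1/(1−τ_K))·[R^un(f) − E log(Col+1) + D_min(f) + D_max(f)]`. -/
theorem augmentation_aware_error_bound_improved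
    (K : ℕ) (hC : 1 ≤ C) (hK : 1 ≤ K)
    (pr : Fin C → ℝ) (hpr : ∀ c, 0 ≤ pr c) (hpr1 : ∑ c, pr c = 1)
    (ρ : Fin C → Measure X) [∀ c, IsProbabilityMeasure (ρ c)]
    (PA : Measure Ω) [IsProbabilityMeasure PA]
    (A : Ω → X → X) (hA : Measurable fun p : Ω × X => A p.1 p.2)
    (f : X → EuclideanSpace ℝ (Fin d)) (hfm : Measurable f)
    (hf : ∀ x, ‖f x‖ = 1)
    (hid : ∃ ω : Ω, A ω = id)
    (hTau : tauK pr K < 1)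
    (hcent : ∀ xb : X, (∫ a, f (A a xb) ∂PA) = f xb)
    (hDminInt1 : ∀ xb xb' : X,
      Integrable (fun a => ⨅ a' : Ω, ‖f (A a xb) - f (A a' xb')‖) PA)
    (hDminInt2 : ∀ (c : Fin C) (xb : X),
      Integrable (fun xb' => ∫ a, (⨅ a' : Ω, ‖f (A a xb) - f (A a' xb')‖) ∂PA) (ρ c))
    (hDminInt3 : ∀ c : Fin C,
      Integrable
        (fun xb => ∫ xb', ∫ a, (⨅ a' : Ω, ‖f (A a xb) - f (A a' xb')‖) ∂PA ∂(ρ c)) (ρ c))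
    (hDmaxInt : ∀ c : Fin C,
      Integrable (fun xb' => ⨆ p : Ω × Ω, ‖f (A p.1 xb') - f (A p.2 xb')‖) (ρ c)) :
    Rsup pr ρ f K ≤ (1 / (1 - tauK pr K)) *
      (Run pr ρ PA A f K - expLogCol pr K + Dmin pr ρ PA A f + Dmax pr ρ A f) := by

  have hpos : 0 < 1 - tauK pr K := by linarith
  have hN : (∑ c, ∑ cs : Fin K → Fin C,
      if colNum c cs = 0 then clsWeight pr c cs * supLoss ρ f c cs else 0) ≤
      Run pr ρ PA A f K - expLogCol pr K + Dmin pr ρ PA A f + Dmax pr ρ A f := by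
    have hw : ∀ (c : Fin C) (cs : Fin K → Fin C), 0 ≤ clsWeight pr c cs :=
      fun c cs => mul_nonneg (hpr c) (Finset.prod_nonneg fun k _ => hpr (cs k))
    have hsum1 : (∑ cs : Fin K → Fin C, ∏ k, pr (cs k)) = 1 := by
      have h := Finset.prod_univ_sum (fun _ : Fin K => (Finset.univ : Finset (Fin C)))
        (fun _ j => pr j)
      rw [Fintype.piFinset_univ] at h
      rw [← h]
      simp [hpr1]
    set dl : Fin C → ℝ := fun c => 1 - ⟪meanRep ρ f c, meanRep ρ f c⟫ with hdl_def
    have hA1 : ∀ (c : Fin C) (cs : Fin K → Fin C),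
        clsWeight pr c cs * supLoss ρ f c cs - clsWeight pr c cs * dl c ≤
          clsWeight pr c cs *
            ∫ xb, ∫ xs, ∫ a, ∫ a', ∫ as,
                infoNCE f K (A a xb) (A a' xb) (fun k => A (as k) (xs k))
              ∂(Measure.pi fun _ : Fin K => PA) ∂PA ∂PA
              ∂(Measure.pi fun k => ρ (cs k)) ∂(ρ c) := by
      intro c cs
      rw [← mul_sub]
      exact mul_le_mul_of_nonneg_left (tuple_bound ρ PA A hA f hfm hf hcent c cs)
        (hw c cs)
    have hsum_main : (∑ c, ∑ cs : Fin K → Fin C,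
        (clsWeight pr c cs * supLoss ρ f c cs - clsWeight pr c cs * dl c)) ≤
        Run pr ρ PA A f K := by
      unfold Run
      exact Finset.sum_le_sum fun c _ => Finset.sum_le_sum fun cs _ => hA1 c cs
    have hdl : ∀ c : Fin C, (∑ cs : Fin K → Fin C, clsWeight pr c cs * dl c) =
        pr c * dl c := by
      intro c
      calc (∑ cs : Fin K → Fin C, clsWeight pr c cs * dl c)
          = ∑ cs : Fin K → Fin C, (∏ k, pr (cs k)) * (pr c * dl c) := by
            refine Finset.sum_congr rfl fun cs _ => ?_
            simp only [clsWeight]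
            ring
        _ = (∑ cs : Fin K → Fin C, ∏ k, pr (cs k)) * (pr c * dl c) :=
            (Finset.sum_mul _ _ _).symm
        _ = pr c * dl c := by rw [hsum1, one_mul]
    have hdlb : (∑ c, pr c * dl c) ≤ Dmin pr ρ PA A f + Dmax pr ρ A f := by
      calc (∑ c, pr c * dl c)
          ≤ ∑ c, pr c *
            ((∫ xb, ∫ xb', ∫ a, (⨅ a' : Ω, ‖f (A a xb) - f (A a' xb')‖)
                ∂PA ∂(ρ c) ∂(ρ c)) +
              ∫ xb', (⨆ p : Ω × Ω, ‖f (A p.1 xb') - f (A p.2 xb')‖) ∂(ρ c)) := by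
            refine Finset.sum_le_sum fun c _ => ?_
            refine mul_le_mul_of_nonneg_left ?_ (hpr c)
            exact class_delta_bound ρ PA A hA f hfm hf hid hcent c hDminInt1
              (hDminInt2 c) (hDminInt3 c) (hDmaxInt c)
        _ = Dmin pr ρ PA A f + Dmax pr ρ A f := by
            unfold Dmin Dmax
            rw [← Finset.sum_add_distrib]
            exact Finset.sum_congr rfl fun c _ => by ring
    have hcol : ∀ (c : Fin C) (cs : Fin K → Fin C),
        (if colNum c cs = 0 then clsWeight pr c cs * supLoss ρ f c cs else 0) +
          clsWeight pr c cs * Real.log (colNum c cs + 1) ≤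
        clsWeight pr c cs * supLoss ρ f c cs := by
      intro c cs
      by_cases h : colNum c cs = 0
      · simp [h]
      · simp only [h, if_false, zero_add]
        exact mul_le_mul_of_nonneg_left (collision_bound ρ f hfm hf c cs) (hw c cs)
    have h1 : (∑ c, ∑ cs : Fin K → Fin C,
        if colNum c cs = 0 then clsWeight pr c cs * supLoss ρ f c cs else 0) +
        expLogCol pr K ≤
        ∑ c, ∑ cs : Fin K → Fin C, clsWeight pr c cs * supLoss ρ f c cs := by
      unfold expLogCol
      rw [← Finset.sum_add_distrib]
      refine Finset.sum_le_sum fun c _ => ?_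
      rw [← Finset.sum_add_distrib]
      exact Finset.sum_le_sum fun cs _ => hcol c cs
    have h2 : (∑ c, ∑ cs : Fin K → Fin C, clsWeight pr c cs * supLoss ρ f c cs) -
        (∑ c, pr c * dl c) ≤ Run pr ρ PA A f K := by
      have he : (∑ c, ∑ cs : Fin K → Fin C,
          (clsWeight pr c cs * supLoss ρ f c cs - clsWeight pr c cs * dl c)) =
          (∑ c, ∑ cs : Fin K → Fin C, clsWeight pr c cs * supLoss ρ f c cs) -
            (∑ c, pr c * dl c) := by
        rw [← Finset.sum_sub_distrib]
        refine Finset.sum_congr rfl fun c _ => ?_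
        rw [← hdl c, ← Finset.sum_sub_distrib]
      rw [← he]
      exact hsum_main
    linarith
  unfold Rsup
  rw [div_le_iff₀ hpos]
  calc (∑ c, ∑ cs : Fin K → Fin C,
      if colNum c cs = 0 then clsWeight pr c cs * supLoss ρ f c cs else 0)
      ≤ Run pr ρ PA A f K - expLogCol pr K + Dmin pr ρ PA A f + Dmax pr ρ A f := hN
    _ = 1 / (1 - tauK pr K) *
        (Run pr ρ PA A f K - expLogCol pr K + Dmin pr ρ PA A f + Dmax pr ρ A f) *
        (1 - tauK pr K) := by
        field_simp


end
end

section
/- For any encoder f : 𝒳 → ℝ^d (with all relevant integrals existing), the intermediate supervised risk admits the analogous decomposition: R̄^sup(f) = E_{c~π} E_{x̄~ρ_c} Σ_{k=0}^{K} Σ_{(i_1,…,i_k) ∈ ([C]\{c})^k} p_k(i_1,…,i_k) · r_k^sup(i_1,…,i_k), where r_k^sup(i_1,…,i_k) = log(1 + (K−k) + Σ_{m=1}^k exp(−f(x̄)ᵀ(μ_c − μ_{i_m}))) and the k = 0 term is p_0 · log(1 + K). -/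
open MeasureTheory Real
open scoped BigOperators RealInnerProductSpace

noncomputable section

variable {X : Type*} [MeasurableSpace X] {Ω : Type*} [MeasurableSpace Ω] {d C : ℕ}

lemma key_sum {α : Type*} [Fintype α] [DecidableEq α] (h e : α → ℝ) (c : α)
    (hec : e c = 1) (φ : ℝ → ℝ) :
    ∀ (K : ℕ) (t : ℝ),
      ∑ g : Fin K → α, (∏ k, h (g k)) * φ (t + ∑ k, e (g k)) =
      ∑ k ∈ Finset.range (K + 1), ∑ i : Fin k → {j : α // j ≠ c},
        (Nat.choose K k : ℝ) * (∏ m, h (i m).1) * h c ^ (K - k) *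
          φ (t + ((K - k : ℕ) : ℝ) + ∑ m, e (i m).1) := by
  intro K
  induction K with
  | zero => intro t; simp
  | succ K IH =>
    intro t
    have hsplit :
        ∑ g : Fin (K + 1) → α, (∏ k, h (g k)) * φ (t + ∑ k, e (g k)) =
          h c * (∑ g : Fin K → α, (∏ k, h (g k)) * φ ((t + 1) + ∑ k, e (g k))) +
          ∑ a : {j : α // j ≠ c},
            h a.1 * ∑ g : Fin K → α, (∏ k, h (g k)) * φ ((t + e a.1) + ∑ k, e (g k)) := by
      rw [← Equiv.sum_comp (Fin.consEquiv fun _ : Fin (K + 1) => α)]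
      simp only [Fin.consEquiv_apply]
      rw [Fintype.sum_prod_type]
      have h1 : ∀ (a : α) (g : Fin K → α),
          (∏ k, h ((Fin.cons a g : Fin (K+1) → α) k)) *
            φ (t + ∑ k, e ((Fin.cons a g : Fin (K+1) → α) k))
          = h a * ((∏ k, h (g k)) * φ ((t + e a) + ∑ k, e (g k))) := by
        intro a g
        rw [Fin.prod_univ_succ, Fin.sum_univ_succ]
        simp only [Fin.cons_zero, Fin.cons_succ]
        rw [← add_assoc]
        ring
      simp only [h1]
      rw [Fintype.sum_eq_add_sum_compl c]
      congr 1
      · rw [Finset.mul_sum]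
        exact Finset.sum_congr rfl fun g _ => by rw [hec]
      · rw [← Finset.sum_subtype ({c}ᶜ : Finset α) (fun x => by simp)
          (fun a : α => h a * ∑ g : Fin K → α,
            (∏ k, h (g k)) * φ ((t + e a) + ∑ k, e (g k)))]
        exact Finset.sum_congr rfl fun a _ => (Finset.mul_sum _ _ _).symm
    rw [hsplit]
    simp only [IH]
    set T : ℕ → ℝ := fun k => ∑ i : Fin k → {j : α // j ≠ c},
      (∏ m, h (i m).1) * h c ^ (K + 1 - k) *
        φ (t + ((K + 1 - k : ℕ) : ℝ) + ∑ m, e (i m).1) with hT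
    have claimA : h c * ∑ k ∈ Finset.range (K + 1), ∑ i : Fin k → {j : α // j ≠ c},
        (Nat.choose K k : ℝ) * (∏ m, h (i m).1) * h c ^ (K - k) *
          φ ((t + 1) + ((K - k : ℕ) : ℝ) + ∑ m, e (i m).1)
        = ∑ k ∈ Finset.range (K + 1), (Nat.choose K k : ℝ) * T k := by
      rw [Finset.mul_sum]
      refine Finset.sum_congr rfl fun k hk => ?_
      rw [hT]
      simp only
      rw [Finset.mul_sum, Finset.mul_sum]
      refine Finset.sum_congr rfl fun i _ => ?_
      have hkK := Finset.mem_range.mp hk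
      have h2 : K + 1 - k = (K - k) + 1 := by omega
      rw [h2]
      push_cast
      have harg : (t + 1) + ((K - k : ℕ) : ℝ) + ∑ m, e (i m).1
          = t + (((K - k : ℕ) : ℝ) + 1) + ∑ m, e (i m).1 := by ring
      rw [harg]
      ring
    have claimB : (∑ a : {j : α // j ≠ c},
        h a.1 * ∑ k ∈ Finset.range (K + 1), ∑ i : Fin k → {j : α // j ≠ c},
          (Nat.choose K k : ℝ) * (∏ m, h (i m).1) * h c ^ (K - k) *
            φ ((t + e a.1) + ((K - k : ℕ) : ℝ) + ∑ m, e (i m).1))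
        = ∑ k ∈ Finset.range (K + 1), (Nat.choose K k : ℝ) * T (k + 1) := by
      simp only [Finset.mul_sum]
      rw [Finset.sum_comm]
      refine Finset.sum_congr rfl fun k hk => ?_
      rw [hT]
      simp only
      have h3 : K + 1 - (k + 1) = K - k := by omega
      rw [h3]
      rw [← Equiv.sum_comp (Fin.consEquiv fun _ : Fin (k + 1) => {j : α // j ≠ c})
        (fun i : Fin (k + 1) → {j : α // j ≠ c} =>
          (∏ m, h (i m).1) * h c ^ (K - k) *
            φ (t + ((K - k : ℕ) : ℝ) + ∑ m, e (i m).1))]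
      rw [Fintype.sum_prod_type, Finset.mul_sum]
      refine Finset.sum_congr rfl fun a _ => ?_
      rw [Finset.mul_sum]
      refine Finset.sum_congr rfl fun i _ => ?_
      simp only [Fin.consEquiv_apply, Fin.prod_univ_succ, Fin.sum_univ_succ,
        Fin.cons_zero, Fin.cons_succ]
      have harg : t + ((K - k : ℕ) : ℝ) + (e a.1 + ∑ m, e (i m).1)
          = (t + e a.1) + ((K - k : ℕ) : ℝ) + ∑ m, e (i m).1 := by ring
      rw [harg]
      ring
    rw [claimA, claimB]
    have hRHS : ∑ k ∈ Finset.range (K + 1 + 1), ∑ i : Fin k → {j : α // j ≠ c},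
        (Nat.choose (K + 1) k : ℝ) * (∏ m, h (i m).1) * h c ^ (K + 1 - k) *
          φ (t + ((K + 1 - k : ℕ) : ℝ) + ∑ m, e (i m).1)
        = ∑ k ∈ Finset.range (K + 2), (Nat.choose (K + 1) k : ℝ) * T k := by
      refine Finset.sum_congr rfl fun k _ => ?_
      rw [hT]
      simp only [Finset.mul_sum]
      exact Finset.sum_congr rfl fun i _ => by ring
    rw [hRHS]
    rw [Finset.sum_range_succ' (fun k => ((Nat.choose (K + 1) k : ℝ)) * T k) (K + 1)]
    simp only [Nat.choose_succ_succ, Nat.cast_add, add_mul, Nat.choose_zero_right,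
      Nat.cast_one, one_mul]
    rw [Finset.sum_add_distrib]
    rw [Finset.sum_range_succ' (fun k => ((Nat.choose K k : ℝ)) * T k) K]
    rw [Finset.sum_range_succ (fun k => ((Nat.choose K (k + 1) : ℝ)) * T (k + 1)) K]
    simp only [Nat.choose_succ_self, Nat.cast_zero, zero_mul, add_zero,
      Nat.choose_zero_right, Nat.cast_one, one_mul]
    ring

lemma integrable_aux {K : ℕ}
    (μ : Measure X) [IsProbabilityMeasure μ]
    (f : X → EuclideanSpace ℝ (Fin d)) (hfm : Measurable f) (M : ℝ)
    (hM : ∀ x, ‖f x‖ ≤ M) (v : Fin K → EuclideanSpace ℝ (Fin d)) :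
    Integrable (fun x => Real.log (1 + ∑ k, Real.exp (-⟪f x, v k⟫))) μ := by
  set M' := max M 0 with hM'
  have hfM' : ∀ x, ‖f x‖ ≤ M' := fun x => (hM x).trans (le_max_left _ _)
  have hmeas : Measurable fun x => Real.log (1 + ∑ k, Real.exp (-⟪f x, v k⟫)) := by
    apply Real.measurable_log.comp
    apply Measurable.add measurable_const
    apply Finset.measurable_sum
    intro k _
    exact Real.measurable_exp.comp (hfm.inner measurable_const).neg
  have hpos : ∀ x : X, (0:ℝ) < 1 + ∑ k, Real.exp (-⟪f x, v k⟫) := fun x => by positivity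
  set B := 1 + ∑ k : Fin K, Real.exp (M' * ‖v k‖) with hB
  refine (integrable_const (Real.log B)).mono' hmeas.aestronglyMeasurable ?_
  refine Filter.Eventually.of_forall fun x => ?_
  have h1le : (1:ℝ) ≤ 1 + ∑ k, Real.exp (-⟪f x, v k⟫) := by
    have : (0:ℝ) ≤ ∑ k, Real.exp (-⟪f x, v k⟫) := by positivity
    linarith
  rw [Real.norm_eq_abs, abs_of_nonneg (Real.log_nonneg h1le)]
  apply Real.log_le_log (hpos x)
  apply add_le_add le_rfl
  apply Finset.sum_le_sum
  intro k _
  apply Real.exp_le_exp.mpr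
  calc -⟪f x, v k⟫ ≤ |⟪f x, v k⟫| := neg_le_abs _
    _ ≤ ‖f x‖ * ‖v k‖ := abs_real_inner_le_norm _ _
    _ ≤ M' * ‖v k‖ := mul_le_mul_of_nonneg_right (hfM' x) (norm_nonneg _)

/-- **Corollary (Error decomposition of `R̄^sup`).**
The intermediate supervised risk decomposes as
`R̄^sup(f) = E_c E_{x̄~ρ_c} Σ_{k=0}^K Σ_{(i_1,…,i_k)∈([C]\{c})^k} p_k(i)·r_k^sup(i)`,
with `r_k^sup(i_1,…,i_k) = log(1 + (K−k) + Σ_{m=1}^k exp(−f(x̄)ᵀ(μ_c − μ_{i_m})))`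
(the `k = 0` term being `p_0 · log(1 + K)`). -/
theorem intermediate_supervised_risk_decomposition
    (K : ℕ) (hC : 1 ≤ C) (hK : 1 ≤ K)
    (pr : Fin C → ℝ) (hpr : ∀ c, 0 ≤ pr c) (hpr1 : ∑ c, pr c = 1)
    (ρ : Fin C → Measure X) [∀ c, IsProbabilityMeasure (ρ c)]
    (f : X → EuclideanSpace ℝ (Fin d)) (hfm : Measurable f)
    (hfb : ∃ M : ℝ, ∀ x : X, ‖f x‖ ≤ M) :
    Rbarsup pr ρ f K =
      ∑ c, pr c *
        ∫ xb,
          (∑ k ∈ Finset.range (K + 1), ∑ i : Fin k → {j : Fin C // j ≠ c},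
            pWeight pr K c k (fun m => (i m).1) *
              rkSup ρ f K c (f xb) k (fun m => (i m).1))
        ∂(ρ c) := by
  classical
  obtain ⟨M, hM⟩ := hfb
  unfold Rbarsup
  refine Finset.sum_congr rfl fun c _ => ?_
  have hint : ∀ cs : Fin K → Fin C, Integrable
      (fun xb => Real.log (1 + ∑ k, Real.exp
        (-⟪f xb, meanRep ρ f c - meanRep ρ f (cs k)⟫))) (ρ c) :=
    fun cs => integrable_aux (ρ c) f hfm M hM _
  calc ∑ cs : Fin K → Fin C, clsWeight pr c cs * supLoss ρ f c cs
      = pr c * ∑ cs : Fin K → Fin C, ∫ xb, (∏ k, pr (cs k)) *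
          Real.log (1 + ∑ k, Real.exp
            (-⟪f xb, meanRep ρ f c - meanRep ρ f (cs k)⟫)) ∂(ρ c) := by
        rw [Finset.mul_sum]
        refine Finset.sum_congr rfl fun cs _ => ?_
        unfold clsWeight supLoss
        rw [MeasureTheory.integral_const_mul]
        ring
    _ = pr c * ∫ xb, (∑ cs : Fin K → Fin C, (∏ k, pr (cs k)) *
          Real.log (1 + ∑ k, Real.exp
            (-⟪f xb, meanRep ρ f c - meanRep ρ f (cs k)⟫))) ∂(ρ c) := by
        congr 1
        rw [integral_finset_sum _ (fun cs _ => (hint cs).const_mul _)]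
    _ = pr c * ∫ xb,
          (∑ k ∈ Finset.range (K + 1), ∑ i : Fin k → {j : Fin C // j ≠ c},
            pWeight pr K c k (fun m => (i m).1) *
              rkSup ρ f K c (f xb) k (fun m => (i m).1)) ∂(ρ c) := by
        congr 1
        refine integral_congr_ae (Filter.Eventually.of_forall fun xb => ?_)
        have hec : Real.exp (-⟪f xb, meanRep ρ f c - meanRep ρ f c⟫) = 1 := by
          simp
        have hkey := key_sum pr
          (fun j => Real.exp (-⟪f xb, meanRep ρ f c - meanRep ρ f j⟫)) c hec
          Real.log K 1
        simp only [pWeight, rkSup]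
        exact hkey

end
end

section
/- (CURL bound) For any encoder f : 𝒳 → ℝ^d with all relevant integrals existing, the intermediate supervised risk satisfies R̄^sup(f) ≥ (1 − τ_K) · R^sup(f) + E_{(c,c_1,…,c_K)~π^{K+1}} log(Col(c,{c_k}) + 1). (Note that E log(Col + 1) = τ_K · E[ log(Col + 1) | Col ≠ 0 ] since log(Col + 1) = 0 on the event Col = 0.) -/
open MeasureTheory Real
open scoped BigOperators RealInnerProductSpace

noncomputable section

variable {X : Type*} [MeasurableSpace X] {Ω : Type*} [MeasurableSpace Ω] {d C : ℕ}

lemma supLoss_ge_log_col {X : Type*} [MeasurableSpace X] {d C K : ℕ}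
    (ρ : Fin C → Measure X) [∀ c, IsProbabilityMeasure (ρ c)]
    (f : X → EuclideanSpace ℝ (Fin d)) (hfm : Measurable f)
    (hfb : ∃ M : ℝ, ∀ x : X, ‖f x‖ ≤ M) (c : Fin C) (cs : Fin K → Fin C) :
    Real.log ((colNum c cs : ℝ) + 1) ≤ supLoss ρ f c cs := by
  obtain ⟨M, hM⟩ := hfb
  set B : ℝ := max M 0 with hB
  have hfB : ∀ x, ‖f x‖ ≤ B := fun x => le_trans (hM x) (le_max_left _ _)
  have hμ : ∀ c', ‖meanRep ρ f c'‖ ≤ B := by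
    intro c'
    have := norm_integral_le_of_norm_le_const (μ := ρ c') (f := f)
      (C := B) (Filter.Eventually.of_forall hfB)
    simpa [meanRep] using this
  set g : X → ℝ := fun xb =>
    Real.log (1 + ∑ k, Real.exp (-⟪f xb, meanRep ρ f c - meanRep ρ f (cs k)⟫)) with hg
  have hsum_nonneg : ∀ xb, (0:ℝ) ≤ ∑ k : Fin K,
      Real.exp (-⟪f xb, meanRep ρ f c - meanRep ρ f (cs k)⟫) :=
    fun xb => Finset.sum_nonneg fun k _ => (Real.exp_pos _).le
  have hg_nonneg : ∀ xb, 0 ≤ g xb := fun xb =>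
    Real.log_nonneg (by linarith [hsum_nonneg xb])
  have hg_le : ∀ xb, g xb ≤ Real.log (1 + K * Real.exp (2 * B ^ 2)) := by
    intro xb
    have hsum : ∑ k : Fin K, Real.exp (-⟪f xb, meanRep ρ f c - meanRep ρ f (cs k)⟫)
        ≤ K * Real.exp (2 * B ^ 2) := by
      calc ∑ k : Fin K, Real.exp (-⟪f xb, meanRep ρ f c - meanRep ρ f (cs k)⟫)
          ≤ ∑ _k : Fin K, Real.exp (2 * B ^ 2) := by
            apply Finset.sum_le_sum
            intro k _
            apply Real.exp_le_exp.2
            have habs : |⟪f xb, meanRep ρ f c - meanRep ρ f (cs k)⟫| ≤ B * (B + B) := by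
              calc |⟪f xb, meanRep ρ f c - meanRep ρ f (cs k)⟫|
                  ≤ ‖f xb‖ * ‖meanRep ρ f c - meanRep ρ f (cs k)‖ :=
                    abs_real_inner_le_norm _ _
                _ ≤ B * (B + B) := by
                    apply mul_le_mul (hfB xb) ?_ (norm_nonneg _)
                      (le_trans (norm_nonneg _) (hfB xb))
                    exact le_trans (norm_sub_le _ _) (add_le_add (hμ c) (hμ (cs k)))
            have := (abs_le.1 habs).1
            nlinarith
        _ = K * Real.exp (2 * B ^ 2) := by simp [Finset.sum_const, mul_comm]
    exact Real.log_le_log (by linarith [hsum_nonneg xb]) (by linarith)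
  have hgm : Measurable g := by
    apply Measurable.log
    exact measurable_const.add
      (Finset.measurable_sum Finset.univ fun k _ =>
        ((hfm.inner measurable_const).neg.exp))
  have hgi : Integrable g (ρ c) := by
    refine (integrable_const (Real.log (1 + K * Real.exp (2 * B ^ 2)))).mono'
      hgm.aestronglyMeasurable ?_
    refine Filter.Eventually.of_forall fun xb => ?_
    rw [Real.norm_eq_abs, abs_of_nonneg (hg_nonneg xb)]
    exact hg_le xb
  have hpt : ∀ xb, Real.log ((colNum c cs : ℝ) + 1) ≤ g xb := by
    intro xb
    apply Real.log_le_log (by positivity)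
    have hcast : (colNum c cs : ℝ) = ∑ k : Fin K, (if cs k = c then (1:ℝ) else 0) := by
      simp [colNum]
    rw [hcast]
    have hle : (∑ k : Fin K, (if cs k = c then (1:ℝ) else 0))
        ≤ ∑ k : Fin K, Real.exp (-⟪f xb, meanRep ρ f c - meanRep ρ f (cs k)⟫) := by
      apply Finset.sum_le_sum
      intro k _
      by_cases h : cs k = c
      · simp [h]
      · simp [h, (Real.exp_pos _).le]
    linarith
  have hconst : Real.log ((colNum c cs : ℝ) + 1)
      = ∫ _xb, Real.log ((colNum c cs : ℝ) + 1) ∂(ρ c) := by simp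
  rw [supLoss, hconst]
  exact integral_mono (integrable_const _) hgi hpt

/-- **Lemma (CURL bound).**
For any encoder `f` (with all relevant integrals existing), the intermediate supervised
risk satisfies `R̄^sup(f) ≥ (1 − τ_K)·R^sup(f) + E_{(c,c_1,…,c_K)~π^{K+1}} log(Col + 1)`. -/
theorem curl_bound
    (K : ℕ) (hC : 1 ≤ C) (hK : 1 ≤ K)
    (pr : Fin C → ℝ) (hpr : ∀ c, 0 ≤ pr c) (hpr1 : ∑ c, pr c = 1)
    (ρ : Fin C → Measure X) [∀ c, IsProbabilityMeasure (ρ c)]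
    (f : X → EuclideanSpace ℝ (Fin d)) (hfm : Measurable f)
    (hfb : ∃ M : ℝ, ∀ x : X, ‖f x‖ ≤ M) :
    Rbarsup pr ρ f K ≥ (1 - tauK pr K) * Rsup pr ρ f K + expLogCol pr K := by
  have hkey : ∀ (c : Fin C) (cs : Fin K → Fin C),
      Real.log ((colNum c cs : ℝ) + 1) ≤ supLoss ρ f c cs :=
    fun c cs => supLoss_ge_log_col ρ f hfm hfb c cs
  have hw : ∀ (c : Fin C) (cs : Fin K → Fin C), 0 ≤ clsWeight pr c cs := fun c cs =>
    mul_nonneg (hpr c) (Finset.prod_nonneg fun k _ => hpr (cs k))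
  have hsupnn : ∀ (c : Fin C) (cs : Fin K → Fin C), 0 ≤ supLoss ρ f c cs := fun c cs =>
    le_trans (Real.log_nonneg (le_add_of_nonneg_left (Nat.cast_nonneg _))) (hkey c cs)
  set S : ℝ := ∑ c, ∑ cs : Fin K → Fin C,
      if colNum c cs = 0 then clsWeight pr c cs * supLoss ρ f c cs else 0 with hS
  have hSnn : 0 ≤ S := by
    apply Finset.sum_nonneg; intro c _
    apply Finset.sum_nonneg; intro cs _
    by_cases h : colNum c cs = 0
    · simp only [if_pos h]; exact mul_nonneg (hw c cs) (hsupnn c cs)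
    · simp [h]
  have hsum1 : ∑ c, ∑ cs : Fin K → Fin C, clsWeight pr c cs = 1 := by
    have h1 : ∑ cs : Fin K → Fin C, ∏ k, pr (cs k) = 1 := by
      calc ∑ cs : Fin K → Fin C, ∏ k, pr (cs k)
          = ∑ cs ∈ Fintype.piFinset (fun _ : Fin K => Finset.univ), ∏ k, pr (cs k) := by
            rw [Fintype.piFinset_univ]
        _ = ∏ _k : Fin K, ∑ c, pr c := (Finset.prod_univ_sum _ _).symm
        _ = 1 := by rw [hpr1]; simp
    calc ∑ c, ∑ cs : Fin K → Fin C, clsWeight pr c cs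
        = ∑ c, pr c * ∑ cs : Fin K → Fin C, ∏ k, pr (cs k) := by
          simp [clsWeight, Finset.mul_sum]
      _ = 1 := by rw [h1]; simpa using hpr1
  have hτ : tauK pr K ≤ 1 := by
    rw [← hsum1, tauK]
    apply Finset.sum_le_sum; intro c _
    apply Finset.sum_le_sum; intro cs _
    by_cases h : colNum c cs ≠ 0
    · simp [h]
    · simp [h, hw c cs]
  have hA : (1 - tauK pr K) * Rsup pr ρ f K ≤ S := by
    rcases (eq_or_lt_of_le (sub_nonneg.2 hτ)).imp Eq.symm id with h | h
    · rw [h, zero_mul]; exact hSnn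
    · rw [Rsup, ← mul_div_assoc, mul_div_cancel_left₀ _ h.ne']
  have hB : S + expLogCol pr K ≤ Rbarsup pr ρ f K := by
    rw [hS, expLogCol, Rbarsup, ← Finset.sum_add_distrib]
    apply Finset.sum_le_sum; intro c _
    rw [← Finset.sum_add_distrib]
    apply Finset.sum_le_sum; intro cs _
    by_cases h : colNum c cs = 0
    · simp [h]
    · simp only [if_neg h, zero_add]
      exact mul_le_mul_of_nonneg_left (hkey c cs) (hw c cs)
  linarith

end
end
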